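/- Let m, n be nonnegative integers and suppose there is a perfect k-coloring g of the Doob graph D(m,n) with quotient matrix S. Then for any nonnegative integers m' and n' there is a perfect k-coloring of D(m+m', n+n') with quotient matrix S + (6m' + 3n')·E. -/

import Mathlib

open SimpleGraph

/-- The Shrikhande graph: Cayley graph on `ZMod 4 × ZMod 4` with connection set
`{(0,1),(0,3),(1,0),(3,0),(1,1),(3,3)}`. -/
def shrikhande : SimpleGraph (ZMod 4 × ZMod 4) :=
  SimpleGraph.fromRel (fun x y =>
    x - y ∈ ({(0, 1), (0, 3), (1, 0), (3, 0), (1, 1), (3, 3)} : Set (ZMod 4 × ZMod 4)))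

/-- Vertices of the Doob graph `D(m,n)`. -/
abbrev DoobVertex (m n : ℕ) := (Fin m → ZMod 4 × ZMod 4) × (Fin n → ZMod 4)

/-- The Doob graph `D(m,n)`: the Cartesian (box) product of `m` copies of the
Shrikhande graph and `n` copies of the complete graph `K₄`. Two vertices are
adjacent iff they differ in exactly one coordinate and are adjacent in the
corresponding factor. -/
def doobGraph (m n : ℕ) : SimpleGraph (DoobVertex m n) :=
  SimpleGraph.fromRel (fun x y =>
    (∃ i, shrikhande.Adj (x.1 i) (y.1 i) ∧ (∀ j, j ≠ i → x.1 j = y.1 j) ∧ x.2 = y.2) ∨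
    (∃ i, x.2 i ≠ y.2 i ∧ (∀ j, j ≠ i → x.2 j = y.2 j) ∧ x.1 = y.1))

/-- `f` is a perfect coloring of `G` with quotient matrix `S`: `f` is surjective and
every vertex of color `i` has exactly `S i j` neighbors of color `j`. -/
def IsPerfectColoring {V C : Type*} (G : SimpleGraph V) (f : V → C)
    (S : Matrix C C ℕ) : Prop :=
  Function.Surjective f ∧
    ∀ x c, {y | G.Adj x y ∧ f y = c}.ncard = S (f x) c

def Tfin : Finset (ZMod 4 × ZMod 4) := {(0,1),(0,3),(1,0),(3,0),(1,1),(3,3)}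

lemma memT (u : ZMod 4 × ZMod 4) :
    u ∈ ({(0, 1), (0, 3), (1, 0), (3, 0), (1, 1), (3, 3)} : Set (ZMod 4 × ZMod 4)) ↔ u ∈ Tfin := by
  simp [Tfin]

lemma Tneg : ∀ u : ZMod 4 × ZMod 4, u ∈ Tfin → -u ∈ Tfin := by decide
lemma Tzero : (0 : ZMod 4 × ZMod 4) ∉ Tfin := by decide

lemma shr_adj_iff (a b : ZMod 4 × ZMod 4) : shrikhande.Adj a b ↔ a - b ∈ Tfin := by
  rw [shrikhande, fromRel_adj]
  constructor
  · rintro ⟨hne, h | h⟩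
    · exact (memT _).mp h
    · have := Tneg _ ((memT _).mp h)
      rwa [neg_sub] at this
  · intro h
    refine ⟨fun he => Tzero ?_, Or.inl ((memT _).mpr h)⟩
    rwa [he, sub_self] at h

lemma shr_deg (a : ZMod 4 × ZMod 4) : {b | shrikhande.Adj a b}.ncard = 6 := by
  have himg : {b | shrikhande.Adj a b} = (fun t => a - t) '' ↑Tfin := by
    ext b
    simp only [Set.mem_setOf_eq, shr_adj_iff, Set.mem_image, Finset.mem_coe]
    constructor
    · intro h; exact ⟨a - b, h, by ring⟩
    · rintro ⟨t, ht, rfl⟩; simpa using ht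
  rw [himg, Set.ncard_image_of_injective _ sub_right_injective, Set.ncard_coe_finset]
  decide

lemma k4_deg (a : ZMod 4) : {b : ZMod 4 | b ≠ a}.ncard = 3 := by
  have : {b : ZMod 4 | b ≠ a} = ↑(({a} : Finset (ZMod 4))ᶜ) := by ext b; simp
  rw [this, Set.ncard_coe_finset, Finset.card_compl, Finset.card_singleton]
  rfl

lemma doob_adj {m n : ℕ} (x y : DoobVertex m n) :
    (doobGraph m n).Adj x y ↔
    ((∃ i, shrikhande.Adj (x.1 i) (y.1 i) ∧ (∀ j, j ≠ i → x.1 j = y.1 j) ∧ x.2 = y.2) ∨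
     (∃ i, x.2 i ≠ y.2 i ∧ (∀ j, j ≠ i → x.2 j = y.2 j) ∧ x.1 = y.1)) := by
  rw [doobGraph, fromRel_adj]
  constructor
  · rintro ⟨hne, h | h⟩
    · exact h
    · rcases h with ⟨i, ha, hj, h2⟩ | ⟨i, ha, hj, h2⟩
      · exact Or.inl ⟨i, ha.symm, fun j hj' => (hj j hj').symm, h2.symm⟩
      · exact Or.inr ⟨i, ha.symm, fun j hj' => (hj j hj').symm, h2.symm⟩
  · intro h
    refine ⟨?_, Or.inl h⟩
    rcases h with ⟨i, ha, _, _⟩ | ⟨i, ha, _, _⟩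
    · intro he; rw [he] at ha; exact ha.ne rfl
    · intro he; rw [he] at ha; exact ha rfl

/-- drop the last Shrikhande coordinate -/
def dropS {m n : ℕ} (y : DoobVertex (m+1) n) : DoobVertex m n :=
  (fun i => y.1 i.castSucc, y.2)

lemma dropS_snoc {m n : ℕ} (z : DoobVertex m n) (b : ZMod 4 × ZMod 4) :
    dropS (Fin.snoc z.1 b, z.2) = z := by
  simp only [dropS, Fin.snoc_castSucc]

lemma stepS {m n k : ℕ} {S : Matrix (Fin k) (Fin k) ℕ}
    {g : DoobVertex m n → Fin k} (hg : IsPerfectColoring (doobGraph m n) g S) :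
    ∃ f : DoobVertex (m+1) n → Fin k,
      IsPerfectColoring (doobGraph (m+1) n) f (S + (6:ℕ) • 1) := by
  obtain ⟨gsurj, gcount⟩ := hg
  refine ⟨g ∘ dropS, fun c => ?_, fun x c => ?_⟩
  · obtain ⟨z, hz⟩ := gsurj c
    exact ⟨(Fin.snoc z.1 0, z.2), by rw [Function.comp_apply, dropS_snoc]; exact hz⟩
  · -- descent of adjacency when last coordinates agree
    have hdesc : ∀ y : DoobVertex (m+1) n, (doobGraph (m+1) n).Adj x y →
        y.1 (Fin.last m) = x.1 (Fin.last m) →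
        (doobGraph m n).Adj (dropS x) (dropS y) := by
      intro y hadj hlast
      rcases (doob_adj x y).mp hadj with ⟨i, hshr, hoth, h2⟩ | ⟨i, hne, hoth, h1⟩
      · have hi : i ≠ Fin.last m := by
          rintro rfl
          rw [hlast] at hshr
          exact hshr.ne rfl
        obtain ⟨i', rfl⟩ := Fin.exists_castSucc_eq.mpr hi
        refine (doob_adj _ _).mpr (Or.inl ⟨i', hshr, ?_, h2⟩)
        intro j hj
        exact hoth j.castSucc (by simpa [Fin.castSucc_inj] using hj)
      · refine (doob_adj _ _).mpr (Or.inr ⟨i, hne, hoth, ?_⟩)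
        funext j
        exact congrFun h1 j.castSucc
    -- lifting adjacency
    have hlift : ∀ z : DoobVertex m n, (doobGraph m n).Adj (dropS x) z →
        (doobGraph (m+1) n).Adj x (Fin.snoc z.1 (x.1 (Fin.last m)), z.2) := by
      intro z hadj
      rcases (doob_adj (dropS x) z).mp hadj with ⟨i, hshr, hoth, h2⟩ | ⟨i, hne, hoth, h1⟩
      · refine (doob_adj _ _).mpr (Or.inl ⟨i.castSucc, ?_, ?_, h2⟩)
        · simpa [Fin.snoc_castSucc, dropS] using hshr
        · intro j hj
          induction j using Fin.lastCases with
          | last => simp only [Fin.snoc_last]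
          | cast j' =>
            simp only [Fin.snoc_castSucc]
            exact hoth j' (fun h => hj (by rw [h]))
      · refine (doob_adj _ _).mpr (Or.inr ⟨i, hne, hoth, ?_⟩)
        funext j
        induction j using Fin.lastCases with
        | last => simp only [Fin.snoc_last]
        | cast j' =>
          simp only [Fin.snoc_castSucc]
          exact congrFun h1 j'
    -- structure of neighbors differing in the last coordinate
    have hBkey : ∀ y : DoobVertex (m+1) n, (doobGraph (m+1) n).Adj x y →
        y.1 (Fin.last m) ≠ x.1 (Fin.last m) →
        shrikhande.Adj (x.1 (Fin.last m)) (y.1 (Fin.last m)) ∧ dropS y = dropS x := by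
      intro y hadj hne
      rcases (doob_adj x y).mp hadj with ⟨i, hshr, hoth, h2⟩ | ⟨i, _, _, h1⟩
      · have hi : i = Fin.last m := by
          by_contra hne'
          exact hne (hoth (Fin.last m) (Ne.symm hne')).symm
        subst hi
        refine ⟨hshr, ?_⟩
        refine Prod.ext ?_ h2.symm
        funext j
        exact (hoth j.castSucc (Fin.castSucc_lt_last j).ne).symm
      · exact absurd (congrFun h1 (Fin.last m)).symm hne
    set A := {y : DoobVertex (m+1) n | (doobGraph (m+1) n).Adj x y ∧ g (dropS y) = c ∧
      y.1 (Fin.last m) = x.1 (Fin.last m)} with hA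
    set B := {y : DoobVertex (m+1) n | (doobGraph (m+1) n).Adj x y ∧ g (dropS y) = c ∧
      y.1 (Fin.last m) ≠ x.1 (Fin.last m)} with hB
    have hsplit : {y | (doobGraph (m+1) n).Adj x y ∧ (g ∘ dropS) y = c} = A ∪ B := by
      ext y
      by_cases h : y.1 (Fin.last m) = x.1 (Fin.last m) <;>
        simp [hA, hB, h, Function.comp]
    have hdisj : Disjoint A B := by
      rw [Set.disjoint_left]
      rintro y ⟨_, _, h1⟩ ⟨_, _, h2⟩
      exact h2 h1
    have hAcard : A.ncard = S (g (dropS x)) c := by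
      have himg : A = (fun z : DoobVertex m n =>
          ((Fin.snoc z.1 (x.1 (Fin.last m)), z.2) : DoobVertex (m+1) n)) ''
          {z | (doobGraph m n).Adj (dropS x) z ∧ g z = c} := by
        ext y
        constructor
        · rintro ⟨hadj, hcol, hlast⟩
          refine ⟨dropS y, ⟨hdesc y hadj hlast, hcol⟩, ?_⟩
          refine Prod.ext ?_ rfl
          funext j
          induction j using Fin.lastCases with
          | last => simp only [Fin.snoc_last]; exact hlast.symm
          | cast j' => simp only [Fin.snoc_castSucc]; rfl
        · rintro ⟨z, ⟨hadj, hcol⟩, rfl⟩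
          refine ⟨hlift z hadj, ?_, ?_⟩
          · rw [dropS_snoc]; exact hcol
          · simp [Fin.snoc_last]
      have hinj : Function.Injective (fun z : DoobVertex m n =>
          ((Fin.snoc z.1 (x.1 (Fin.last m)), z.2) : DoobVertex (m+1) n)) := by
        intro z1 z2 h
        have := congrArg dropS h
        rwa [dropS_snoc, dropS_snoc] at this
      rw [himg, Set.ncard_image_of_injective _ hinj, gcount]
    have hBcard : B.ncard = if g (dropS x) = c then 6 else 0 := by
      by_cases hc : g (dropS x) = c
      · rw [if_pos hc]
        have himg : B = (fun b => ((Function.update x.1 (Fin.last m) b, x.2) :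
            DoobVertex (m+1) n)) '' {b | shrikhande.Adj (x.1 (Fin.last m)) b} := by
          ext y
          constructor
          · rintro ⟨hadj, hcol, hlast⟩
            obtain ⟨hshr, hpe⟩ := hBkey y hadj hlast
            refine ⟨y.1 (Fin.last m), hshr, ?_⟩
            refine Prod.ext ?_ (congrArg Prod.snd hpe).symm
            funext j
            induction j using Fin.lastCases with
            | last => simp only [Function.update_self]
            | cast j' =>
              simp only [Function.update_of_ne (Fin.castSucc_lt_last j').ne]
              exact (congrFun (congrArg Prod.fst hpe) j').symm
          · rintro ⟨b, hb, rfl⟩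
            refine ⟨?_, ?_, ?_⟩
            · refine (doob_adj _ _).mpr (Or.inl ⟨Fin.last m, ?_, ?_, rfl⟩)
              · simp only [Function.update_self]; exact hb
              · intro j hj
                simp only [Function.update_of_ne hj]
            · have : dropS ((Function.update x.1 (Fin.last m) b, x.2) :
                  DoobVertex (m+1) n) = dropS x := by
                refine Prod.ext ?_ rfl
                funext j
                exact Function.update_of_ne (Fin.castSucc_lt_last j).ne _ _
              rw [this]; exact hc
            · simp only [Function.update_self]
              have hb' : shrikhande.Adj (x.1 (Fin.last m)) b := hb
              exact hb'.ne'
        have hinj : Function.Injective (fun b => ((Function.update x.1 (Fin.last m) b, x.2) :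
            DoobVertex (m+1) n)) := by
          intro b1 b2 h
          have := congrFun (congrArg Prod.fst h) (Fin.last m)
          simpa only [Function.update_self] using this
        rw [himg, Set.ncard_image_of_injective _ hinj, shr_deg]
      · rw [if_neg hc]
        have : B = ∅ := by
          ext y
          simp only [Set.mem_empty_iff_false, iff_false, hB, Set.mem_setOf_eq]
          rintro ⟨hadj, hcol, hlast⟩
          obtain ⟨_, hpe⟩ := hBkey y hadj hlast
          rw [hpe] at hcol
          exact hc hcol
        rw [this, Set.ncard_empty]
    rw [hsplit, Set.ncard_union_eq hdisj (Set.toFinite _) (Set.toFinite _), hAcard, hBcard]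
    simp only [Function.comp_apply, Matrix.add_apply, Matrix.smul_apply, Matrix.one_apply,
      smul_eq_mul]
    by_cases hc : g (dropS x) = c
    · simp [hc]
    · simp [hc]

/-- drop the last K4 coordinate -/
def dropK {m n : ℕ} (y : DoobVertex m (n+1)) : DoobVertex m n :=
  (y.1, fun i => y.2 i.castSucc)

lemma dropK_snoc {m n : ℕ} (z : DoobVertex m n) (b : ZMod 4) :
    dropK (z.1, Fin.snoc z.2 b) = z := by
  simp only [dropK, Fin.snoc_castSucc]

lemma stepK {m n k : ℕ} {S : Matrix (Fin k) (Fin k) ℕ}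
    {g : DoobVertex m n → Fin k} (hg : IsPerfectColoring (doobGraph m n) g S) :
    ∃ f : DoobVertex m (n+1) → Fin k,
      IsPerfectColoring (doobGraph m (n+1)) f (S + (3:ℕ) • 1) := by
  obtain ⟨gsurj, gcount⟩ := hg
  refine ⟨g ∘ dropK, fun c => ?_, fun x c => ?_⟩
  · obtain ⟨z, hz⟩ := gsurj c
    exact ⟨(z.1, Fin.snoc z.2 0), by rw [Function.comp_apply, dropK_snoc]; exact hz⟩
  · have hdesc : ∀ y : DoobVertex m (n+1), (doobGraph m (n+1)).Adj x y →
        y.2 (Fin.last n) = x.2 (Fin.last n) →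
        (doobGraph m n).Adj (dropK x) (dropK y) := by
      intro y hadj hlast
      rcases (doob_adj x y).mp hadj with ⟨i, hshr, hoth, h2⟩ | ⟨i, hne, hoth, h1⟩
      · refine (doob_adj _ _).mpr (Or.inl ⟨i, hshr, hoth, ?_⟩)
        funext j
        exact congrFun h2 j.castSucc
      · have hi : i ≠ Fin.last n := by
          rintro rfl
          exact hne hlast.symm
        obtain ⟨i', rfl⟩ := Fin.exists_castSucc_eq.mpr hi
        refine (doob_adj _ _).mpr (Or.inr ⟨i', hne, ?_, h1⟩)
        intro j hj
        exact hoth j.castSucc (by simpa [Fin.castSucc_inj] using hj)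
    have hlift : ∀ z : DoobVertex m n, (doobGraph m n).Adj (dropK x) z →
        (doobGraph m (n+1)).Adj x (z.1, Fin.snoc z.2 (x.2 (Fin.last n))) := by
      intro z hadj
      rcases (doob_adj (dropK x) z).mp hadj with ⟨i, hshr, hoth, h2⟩ | ⟨i, hne, hoth, h1⟩
      · refine (doob_adj _ _).mpr (Or.inl ⟨i, hshr, hoth, ?_⟩)
        funext j
        induction j using Fin.lastCases with
        | last => simp only [Fin.snoc_last]
        | cast j' =>
          simp only [Fin.snoc_castSucc]
          exact congrFun h2 j'
      · refine (doob_adj _ _).mpr (Or.inr ⟨i.castSucc, ?_, ?_, h1⟩)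
        · simpa [Fin.snoc_castSucc, dropK] using hne
        · intro j hj
          induction j using Fin.lastCases with
          | last => simp only [Fin.snoc_last]
          | cast j' =>
            simp only [Fin.snoc_castSucc]
            exact hoth j' (fun h => hj (by rw [h]))
    have hBkey : ∀ y : DoobVertex m (n+1), (doobGraph m (n+1)).Adj x y →
        y.2 (Fin.last n) ≠ x.2 (Fin.last n) → dropK y = dropK x := by
      intro y hadj hne
      rcases (doob_adj x y).mp hadj with ⟨i, _, _, h2⟩ | ⟨i, hne2, hoth, h1⟩
      · exact absurd (congrFun h2 (Fin.last n)).symm hne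
      · have hi : i = Fin.last n := by
          by_contra hne'
          exact hne (hoth (Fin.last n) (Ne.symm hne')).symm
        subst hi
        refine Prod.ext h1.symm ?_
        funext j
        exact (hoth j.castSucc (Fin.castSucc_lt_last j).ne).symm
    set A := {y : DoobVertex m (n+1) | (doobGraph m (n+1)).Adj x y ∧ g (dropK y) = c ∧
      y.2 (Fin.last n) = x.2 (Fin.last n)} with hA
    set B := {y : DoobVertex m (n+1) | (doobGraph m (n+1)).Adj x y ∧ g (dropK y) = c ∧
      y.2 (Fin.last n) ≠ x.2 (Fin.last n)} with hB
    have hsplit : {y | (doobGraph m (n+1)).Adj x y ∧ (g ∘ dropK) y = c} = A ∪ B := by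
      ext y
      by_cases h : y.2 (Fin.last n) = x.2 (Fin.last n) <;>
        simp [hA, hB, h, Function.comp]
    have hdisj : Disjoint A B := by
      rw [Set.disjoint_left]
      rintro y ⟨_, _, h1⟩ ⟨_, _, h2⟩
      exact h2 h1
    have hAcard : A.ncard = S (g (dropK x)) c := by
      have himg : A = (fun z : DoobVertex m n =>
          ((z.1, Fin.snoc z.2 (x.2 (Fin.last n))) : DoobVertex m (n+1))) ''
          {z | (doobGraph m n).Adj (dropK x) z ∧ g z = c} := by
        ext y
        constructor
        · rintro ⟨hadj, hcol, hlast⟩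
          refine ⟨dropK y, ⟨hdesc y hadj hlast, hcol⟩, ?_⟩
          refine Prod.ext rfl ?_
          funext j
          induction j using Fin.lastCases with
          | last => simp only [Fin.snoc_last]; exact hlast.symm
          | cast j' => simp only [Fin.snoc_castSucc]; rfl
        · rintro ⟨z, ⟨hadj, hcol⟩, rfl⟩
          refine ⟨hlift z hadj, ?_, ?_⟩
          · rw [dropK_snoc]; exact hcol
          · simp [Fin.snoc_last]
      have hinj : Function.Injective (fun z : DoobVertex m n =>
          ((z.1, Fin.snoc z.2 (x.2 (Fin.last n))) : DoobVertex m (n+1))) := by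
        intro z1 z2 h
        have := congrArg dropK h
        rwa [dropK_snoc, dropK_snoc] at this
      rw [himg, Set.ncard_image_of_injective _ hinj, gcount]
    have hBcard : B.ncard = if g (dropK x) = c then 3 else 0 := by
      by_cases hc : g (dropK x) = c
      · rw [if_pos hc]
        have himg : B = (fun b => ((x.1, Function.update x.2 (Fin.last n) b) :
            DoobVertex m (n+1))) '' {b : ZMod 4 | b ≠ x.2 (Fin.last n)} := by
          ext y
          constructor
          · rintro ⟨hadj, hcol, hlast⟩
            have hpe := hBkey y hadj hlast
            refine ⟨y.2 (Fin.last n), hlast, ?_⟩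
            refine Prod.ext (congrArg Prod.fst hpe).symm ?_
            funext j
            induction j using Fin.lastCases with
            | last => simp only [Function.update_self]
            | cast j' =>
              simp only [Function.update_of_ne (Fin.castSucc_lt_last j').ne]
              exact (congrFun (congrArg Prod.snd hpe) j').symm
          · rintro ⟨b, hb, rfl⟩
            have hb' : b ≠ x.2 (Fin.last n) := hb
            refine ⟨?_, ?_, ?_⟩
            · refine (doob_adj _ _).mpr (Or.inr ⟨Fin.last n, ?_, ?_, rfl⟩)
              · simp only [Function.update_self]
                exact Ne.symm hb'
              · intro j hj
                simp only [Function.update_of_ne hj]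
            · have : dropK ((x.1, Function.update x.2 (Fin.last n) b) :
                  DoobVertex m (n+1)) = dropK x := by
                refine Prod.ext rfl ?_
                funext j
                exact Function.update_of_ne (Fin.castSucc_lt_last j).ne _ _
              rw [this]; exact hc
            · simp only [Function.update_self]; exact hb'
        have hinj : Function.Injective (fun b => ((x.1, Function.update x.2 (Fin.last n) b) :
            DoobVertex m (n+1))) := by
          intro b1 b2 h
          have := congrFun (congrArg Prod.snd h) (Fin.last n)
          simpa only [Function.update_self] using this
        rw [himg, Set.ncard_image_of_injective _ hinj, k4_deg]
      · rw [if_neg hc]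
        have : B = ∅ := by
          ext y
          simp only [Set.mem_empty_iff_false, iff_false, hB, Set.mem_setOf_eq]
          rintro ⟨hadj, hcol, hlast⟩
          have hpe := hBkey y hadj hlast
          rw [hpe] at hcol
          exact hc hcol
        rw [this, Set.ncard_empty]
    rw [hsplit, Set.ncard_union_eq hdisj (Set.toFinite _) (Set.toFinite _), hAcard, hBcard]
    simp only [Function.comp_apply, Matrix.add_apply, Matrix.smul_apply, Matrix.one_apply,
      smul_eq_mul]
    by_cases hc : g (dropK x) = c
    · simp [hc]
    · simp [hc]


theorem stmt_0 (m n k : ℕ) (S : Matrix (Fin k) (Fin k) ℕ)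
    (g : DoobVertex m n → Fin k)
    (hg : IsPerfectColoring (doobGraph m n) g S)
    (m' n' : ℕ) :
    ∃ f : DoobVertex (m + m') (n + n') → Fin k,
      IsPerfectColoring (doobGraph (m + m') (n + n')) f
        (S + (6 * m' + 3 * n') • (1 : Matrix (Fin k) (Fin k) ℕ)) := by
  have key1 : ∀ (m' : ℕ) (S : Matrix (Fin k) (Fin k) ℕ),
      (∃ g : DoobVertex m n → Fin k, IsPerfectColoring (doobGraph m n) g S) →
      ∃ f : DoobVertex (m + m') n → Fin k,
        IsPerfectColoring (doobGraph (m + m') n) f (S + (6 * m') • 1) := by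
    intro m'
    induction m' with
    | zero => intro S hS; simpa using hS
    | succ m' ih =>
      intro S hS
      obtain ⟨f, hf⟩ := ih S hS
      obtain ⟨f', hf'⟩ := stepS hf
      refine ⟨f', ?_⟩
      have : S + (6 * m') • (1 : Matrix (Fin k) (Fin k) ℕ) + (6:ℕ) • 1
          = S + (6 * (m' + 1)) • 1 := by
        rw [show 6 * (m' + 1) = 6 * m' + 6 from by ring, add_smul, add_assoc]
      rwa [this] at hf'
  have key2 : ∀ (n' : ℕ) (M : ℕ) (S : Matrix (Fin k) (Fin k) ℕ),
      (∃ g : DoobVertex M n → Fin k, IsPerfectColoring (doobGraph M n) g S) →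
      ∃ f : DoobVertex M (n + n') → Fin k,
        IsPerfectColoring (doobGraph M (n + n')) f (S + (3 * n') • 1) := by
    intro n'
    induction n' with
    | zero => intro M S hS; simpa using hS
    | succ n' ih =>
      intro M S hS
      obtain ⟨f, hf⟩ := ih M S hS
      obtain ⟨f', hf'⟩ := stepK hf
      refine ⟨f', ?_⟩
      have : S + (3 * n') • (1 : Matrix (Fin k) (Fin k) ℕ) + (3:ℕ) • 1
          = S + (3 * (n' + 1)) • 1 := by
        rw [show 3 * (n' + 1) = 3 * n' + 3 from by ring, add_smul, add_assoc]
      rwa [this] at hf'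
  obtain ⟨f1, hf1⟩ := key1 m' S ⟨g, hg⟩
  obtain ⟨f2, hf2⟩ := key2 n' (m + m') _ ⟨f1, hf1⟩
  refine ⟨f2, ?_⟩
  have : S + (6 * m') • (1 : Matrix (Fin k) (Fin k) ℕ) + (3 * n') • 1
      = S + (6 * m' + 3 * n') • 1 := by
    rw [add_smul, add_assoc]
  rwa [this] at hf2
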